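/- Let H be a 2-covered T_r-free r-graph on [n] and suppose (x₁,...,x_n) is an optimal solution for the Lagrangian of H (so P_H(x) = λ(H) = 1/r^r). Then every coordinate satisfies x_i ≤ 1/r. -/

import Mathlib

open Finset

namespace OptCoordAux

variable {n : ℕ}

/-- Derivative of the Lagrangian polynomial at vertex `j`. -/
def Dl (H : Finset (Finset (Fin n))) (x : Fin n → ℝ) (j : Fin n) : ℝ :=
  ∑ e ∈ H, if j ∈ e then ∏ i ∈ e.erase j, x i else 0

/-- Second mixed derivative at vertices `j, k`. -/
def El (H : Finset (Finset (Fin n))) (x : Fin n → ℝ) (j k : Fin n) : ℝ :=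
  ∑ e ∈ H, if j ∈ e ∧ k ∈ e then ∏ i ∈ (e.erase j).erase k, x i else 0

lemma Dl_nonneg (H : Finset (Finset (Fin n))) (x : Fin n → ℝ) (hnn : ∀ i, 0 ≤ x i) (j : Fin n) :
    0 ≤ Dl H x j := by
  refine Finset.sum_nonneg fun e _ => ?_
  split
  · exact Finset.prod_nonneg fun i _ => hnn i
  · exact le_refl 0

lemma El_nonneg (H : Finset (Finset (Fin n))) (x : Fin n → ℝ) (hnn : ∀ i, 0 ≤ x i) (j k : Fin n) :
    0 ≤ El H x j k := by
  refine Finset.sum_nonneg fun e _ => ?_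
  split
  · exact Finset.prod_nonneg fun i _ => hnn i
  · exact le_refl 0

/-- Euler identity: `∑ j, x j * Dl j = r * P`. -/
lemma euler (H : Finset (Finset (Fin n))) (x : Fin n → ℝ) (r : ℕ)
    (huniform : ∀ e ∈ H, e.card = r) :
    ∑ j, x j * Dl H x j = (r : ℝ) * ∑ e ∈ H, ∏ i ∈ e, x i := by
  have h1 : ∑ j, x j * Dl H x j
      = ∑ j, ∑ e ∈ H, (if j ∈ e then x j * ∏ i ∈ e.erase j, x i else 0) := by
    refine Finset.sum_congr rfl fun j _ => ?_
    rw [Dl, Finset.mul_sum]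
    refine Finset.sum_congr rfl fun e _ => ?_
    split <;> simp
  rw [h1, Finset.sum_comm, Finset.mul_sum]
  refine Finset.sum_congr rfl fun e he => ?_
  have h2 : ∑ j, (if j ∈ e then x j * ∏ i ∈ e.erase j, x i else 0)
      = ∑ j ∈ e, x j * ∏ i ∈ e.erase j, x i := by
    rw [Finset.sum_ite_mem, Finset.univ_inter]
  rw [h2]
  have h3 : ∀ j ∈ e, x j * ∏ i ∈ e.erase j, x i = ∏ i ∈ e, x i := fun j hj =>
    Finset.mul_prod_erase e x hj
  rw [Finset.sum_congr rfl h3, Finset.sum_const, huniform e he, nsmul_eq_mul]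

/-- Link Euler identity at `k`. -/
lemma link_euler (H : Finset (Finset (Fin n))) (x : Fin n → ℝ) (r : ℕ) (hr : 1 ≤ r)
    (huniform : ∀ e ∈ H, e.card = r) (k : Fin n) :
    ∑ j ∈ univ.erase k, x j * El H x j k = ((r : ℝ) - 1) * Dl H x k := by
  have h1 : ∑ j ∈ univ.erase k, x j * El H x j k
      = ∑ j ∈ univ.erase k, ∑ e ∈ H,
          (if j ∈ e ∧ k ∈ e then x j * ∏ i ∈ (e.erase j).erase k, x i else 0) := by
    refine Finset.sum_congr rfl fun j _ => ?_
    rw [El, Finset.mul_sum]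
    refine Finset.sum_congr rfl fun e _ => ?_
    split <;> simp
  rw [h1, Finset.sum_comm, Dl, Finset.mul_sum]
  refine Finset.sum_congr rfl fun e he => ?_
  by_cases hk : k ∈ e
  · have h2 : ∀ j ∈ univ.erase k,
        (if j ∈ e ∧ k ∈ e then x j * ∏ i ∈ (e.erase j).erase k, x i else 0)
        = (if j ∈ e then x j * ∏ i ∈ (e.erase k).erase j, x i else 0) := by
      intro j _
      rw [Finset.erase_right_comm]
      simp [hk]
    rw [Finset.sum_congr rfl h2]
    have h3 : ∑ j ∈ univ.erase k, (if j ∈ e then x j * ∏ i ∈ (e.erase k).erase j, x i else 0)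
        = ∑ j ∈ (univ.erase k) ∩ e, x j * ∏ i ∈ (e.erase k).erase j, x i :=
      Finset.sum_ite_mem _ _ _
    have hset : (univ.erase k) ∩ e = e.erase k := by
      ext a
      simp [and_comm]
    rw [h3, hset]
    have h4 : ∀ j ∈ e.erase k, x j * ∏ i ∈ (e.erase k).erase j, x i
        = ∏ i ∈ e.erase k, x i := fun j hj => Finset.mul_prod_erase _ x hj
    rw [Finset.sum_congr rfl h4, Finset.sum_const, Finset.card_erase_of_mem hk,
      huniform e he, if_pos hk, nsmul_eq_mul]
    congr 1
    push_cast [Nat.cast_sub hr]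
    ring
  · rw [if_neg hk, mul_zero]
    refine Finset.sum_eq_zero fun j _ => ?_
    have hne : ¬ (j ∈ e ∧ k ∈ e) := fun h => hk h.2
    rw [if_neg hne]

/-- `x k * El j k ≤ Dl j` for `j ≠ k`. -/
lemma xk_El_le_Dl (H : Finset (Finset (Fin n))) (x : Fin n → ℝ) (hnn : ∀ i, 0 ≤ x i)
    (j k : Fin n) (hjk : j ≠ k) :
    x k * El H x j k ≤ Dl H x j := by
  rw [El, Finset.mul_sum, Dl]
  refine Finset.sum_le_sum fun e _ => ?_
  by_cases h : j ∈ e ∧ k ∈ e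
  · rw [if_pos h, if_pos h.1]
    have hk' : k ∈ e.erase j := Finset.mem_erase.mpr ⟨fun hh => hjk hh.symm, h.2⟩
    rw [Finset.mul_prod_erase (e.erase j) x hk']
  · rw [if_neg h, mul_zero]
    split
    · exact Finset.prod_nonneg fun i _ => hnn i
    · exact le_refl 0

/-- Multilinear perturbation identity: moving `ε` of mass from `j` to `l`. -/
lemma perturb (H : Finset (Finset (Fin n))) (x : Fin n → ℝ) (j l : Fin n) (hjl : j ≠ l)
    (ε : ℝ) (y : Fin n → ℝ)
    (hy : ∀ i, y i = if i = l then x l + ε else if i = j then x j - ε else x i) :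
    ∑ e ∈ H, ∏ i ∈ e, y i
      = (∑ e ∈ H, ∏ i ∈ e, x i) + ε * (Dl H x l - Dl H x j) - ε ^ 2 * El H x l j := by
  have key : ∀ e ∈ H, ∏ i ∈ e, y i
      = ∏ i ∈ e, x i
        + ε * ((if l ∈ e then ∏ i ∈ e.erase l, x i else 0)
              - (if j ∈ e then ∏ i ∈ e.erase j, x i else 0))
        - ε ^ 2 * (if l ∈ e ∧ j ∈ e then ∏ i ∈ (e.erase l).erase j, x i else 0) := by
    intro e _
    by_cases hl : l ∈ e <;> by_cases hj : j ∈ e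
    · -- both l and j in e
      have hj' : j ∈ e.erase l := Finset.mem_erase.mpr ⟨hjl, hj⟩
      have hrest : ∏ i ∈ (e.erase l).erase j, y i = ∏ i ∈ (e.erase l).erase j, x i := by
        refine Finset.prod_congr rfl fun i hi => ?_
        have hij : i ≠ j := (Finset.mem_erase.mp hi).1
        have hil : i ≠ l := (Finset.mem_erase.mp (Finset.mem_of_mem_erase hi : i ∈ e.erase l)).1
        rw [hy i, if_neg hil, if_neg hij]
      have hYe : ∏ i ∈ e, y i
          = (x l + ε) * ((x j - ε) * ∏ i ∈ (e.erase l).erase j, x i) := by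
        rw [← Finset.mul_prod_erase e y hl, ← Finset.mul_prod_erase (e.erase l) y hj', hrest]
        congr 1
        · rw [hy l, if_pos rfl]
        · congr 1
          rw [hy j, if_neg hjl, if_pos rfl]
      have hXe : ∏ i ∈ e, x i
          = x l * (x j * ∏ i ∈ (e.erase l).erase j, x i) := by
        rw [← Finset.mul_prod_erase e x hl, ← Finset.mul_prod_erase (e.erase l) x hj']
      have hXl : ∏ i ∈ e.erase l, x i = x j * ∏ i ∈ (e.erase l).erase j, x i :=
        (Finset.mul_prod_erase (e.erase l) x hj').symm
      have hXj : ∏ i ∈ e.erase j, x i = x l * ∏ i ∈ (e.erase l).erase j, x i := by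
        have hl' : l ∈ e.erase j := Finset.mem_erase.mpr ⟨fun hh => hjl hh.symm, hl⟩
        rw [← Finset.mul_prod_erase (e.erase j) x hl', Finset.erase_right_comm]
      rw [hYe, hXe, if_pos hl, if_pos hj, if_pos (⟨hl, hj⟩ : l ∈ e ∧ j ∈ e), hXl, hXj]
      ring
    · -- l in e, j not in e
      have hrest : ∏ i ∈ e.erase l, y i = ∏ i ∈ e.erase l, x i := by
        refine Finset.prod_congr rfl fun i hi => ?_
        have hil : i ≠ l := (Finset.mem_erase.mp hi).1
        have hij : i ≠ j := fun hh => hj (hh ▸ Finset.mem_of_mem_erase hi)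
        rw [hy i, if_neg hil, if_neg hij]
      have hYe : ∏ i ∈ e, y i = (x l + ε) * ∏ i ∈ e.erase l, x i := by
        rw [← Finset.mul_prod_erase e y hl, hrest]
        congr 1
        rw [hy l, if_pos rfl]
      have hXe : ∏ i ∈ e, x i = x l * ∏ i ∈ e.erase l, x i :=
        (Finset.mul_prod_erase e x hl).symm
      have hcond : ¬ (l ∈ e ∧ j ∈ e) := fun h => hj h.2
      rw [hYe, hXe, if_pos hl, if_neg hj, if_neg hcond]
      ring
    · -- j in e, l not in e
      have hrest : ∏ i ∈ e.erase j, y i = ∏ i ∈ e.erase j, x i := by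
        refine Finset.prod_congr rfl fun i hi => ?_
        have hij : i ≠ j := (Finset.mem_erase.mp hi).1
        have hil : i ≠ l := fun hh => hl (hh ▸ Finset.mem_of_mem_erase hi)
        rw [hy i, if_neg hil, if_neg hij]
      have hYe : ∏ i ∈ e, y i = (x j - ε) * ∏ i ∈ e.erase j, x i := by
        rw [← Finset.mul_prod_erase e y hj, hrest]
        congr 1
        rw [hy j, if_neg hjl, if_pos rfl]
      have hXe : ∏ i ∈ e, x i = x j * ∏ i ∈ e.erase j, x i :=
        (Finset.mul_prod_erase e x hj).symm
      have hcond : ¬ (l ∈ e ∧ j ∈ e) := fun h => hl h.1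
      rw [hYe, hXe, if_neg hl, if_pos hj, if_neg hcond]
      ring
    · -- neither
      have hrest : ∏ i ∈ e, y i = ∏ i ∈ e, x i := by
        refine Finset.prod_congr rfl fun i hi => ?_
        have hil : i ≠ l := fun hh => hl (hh ▸ hi)
        have hij : i ≠ j := fun hh => hj (hh ▸ hi)
        rw [hy i, if_neg hil, if_neg hij]
      have hcond : ¬ (l ∈ e ∧ j ∈ e) := fun h => hl h.1
      rw [hrest, if_neg hl, if_neg hj, if_neg hcond]
      ring
  rw [Finset.sum_congr rfl key, Finset.sum_sub_distrib, Finset.sum_add_distrib,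
    ← Finset.mul_sum, Finset.sum_sub_distrib, ← Finset.mul_sum]
  rfl

end OptCoordAux

open OptCoordAux

/-- An `r`-graph is `𝒯_r`-free if it contains no three (distinct) edges `A, B, C`
with `A ⊆ B ∪ C` and `(B ∩ C) \ A ≠ ∅`. -/
def TriangleFree {V : Type*} [DecidableEq V] (H : Finset (Finset V)) : Prop :=
  ¬ ∃ A ∈ H, ∃ B ∈ H, ∃ C ∈ H, A ≠ B ∧ A ≠ C ∧ B ≠ C ∧
      A ⊆ B ∪ C ∧ ((B ∩ C) \ A).Nonempty

/-- If `H` is a `2`-covered `𝒯_r`-free `r`-graph on `[n]` and `x` is an optimal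
solution for the Lagrangian of `H`, then every coordinate satisfies `x i ≤ 1/r`. -/
theorem optimal_coordinates_small (n r : ℕ) (hr : 2 ≤ r) (hn : r ≤ n)
    (H : Finset (Finset (Fin n))) (huniform : ∀ e ∈ H, e.card = r)
    (hcov : ∀ u v : Fin n, u ≠ v → ∃ e ∈ H, u ∈ e ∧ v ∈ e)
    (hfree : TriangleFree H)
    (x : Fin n → ℝ) (hnn : ∀ i, 0 ≤ x i) (hsum : ∑ i, x i = 1)
    (hopt : ∀ y : Fin n → ℝ, (∀ i, 0 ≤ y i) → ∑ i, y i = 1 →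
      ∑ e ∈ H, ∏ i ∈ e, y i ≤ ∑ e ∈ H, ∏ i ∈ e, x i) :
    ∀ i, x i ≤ 1 / (r : ℝ) := by
  classical
  have hn2 : 2 ≤ n := le_trans hr hn
  have hr0 : (0 : ℝ) < (r : ℝ) := by
    have : 0 < r := by omega
    exact_mod_cast this
  set Pa : ℝ := ∑ e ∈ H, ∏ i ∈ e, x i with hPadef
  -- Step 1 : Pa > 0
  have hPa : 0 < Pa := by
    have ha : (⟨0, by omega⟩ : Fin n) ≠ (⟨1, by omega⟩ : Fin n) := by
      simp [Fin.ext_iff]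
    obtain ⟨e0, he0, -, -⟩ := hcov _ _ ha
    set y0 : Fin n → ℝ := fun i => if i ∈ e0 then (r : ℝ)⁻¹ else 0 with hy0def
    have hy0nn : ∀ i, 0 ≤ y0 i := by
      intro i
      simp only [hy0def]
      split
      · positivity
      · exact le_refl 0
    have hy0sum : ∑ i, y0 i = 1 := by
      simp only [hy0def]
      rw [Finset.sum_ite_mem, Finset.univ_inter, Finset.sum_const, huniform e0 he0,
        nsmul_eq_mul]
      exact mul_inv_cancel₀ (ne_of_gt hr0)
    have hprod : ∏ i ∈ e0, y0 i = (r : ℝ)⁻¹ ^ r := by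
      have : ∀ i ∈ e0, y0 i = (r : ℝ)⁻¹ := by
        intro i hi
        simp only [hy0def, if_pos hi]
      rw [Finset.prod_congr rfl this, Finset.prod_const, huniform e0 he0]
    have hsingle : (r : ℝ)⁻¹ ^ r ≤ ∑ e ∈ H, ∏ i ∈ e, y0 i := by
      rw [← hprod]
      exact Finset.single_le_sum (f := fun e => ∏ i ∈ e, y0 i)
        (fun e _ => Finset.prod_nonneg fun i _ => hy0nn i) he0
    have hpos : (0 : ℝ) < (r : ℝ)⁻¹ ^ r := by positivity
    exact lt_of_lt_of_le hpos (le_trans hsingle (hopt y0 hy0nn hy0sum))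
  -- Step 2 : KKT — on the support all derivatives dominate
  have hKKT : ∀ j l : Fin n, 0 < x j → Dl H x l ≤ Dl H x j := by
    intro j l hj
    by_cases hjl : j = l
    · subst hjl; exact le_refl _
    · by_contra hcon
      push_neg at hcon
      set c : ℝ := Dl H x l - Dl H x j with hcdef
      have hcpos : 0 < c := sub_pos.mpr hcon
      set Ev : ℝ := El H x l j with hEvdef
      have hEv : 0 ≤ Ev := El_nonneg H x hnn l j
      set ε : ℝ := min (x j) (c / (Ev + 1)) with hεdef
      have hε0 : 0 < ε := lt_min hj (by positivity)
      have hεxj : ε ≤ x j := min_le_left _ _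
      have hεc : ε * (Ev + 1) ≤ c := by
        have h := min_le_right (x j) (c / (Ev + 1))
        calc ε * (Ev + 1) ≤ (c / (Ev + 1)) * (Ev + 1) := by
              apply mul_le_mul_of_nonneg_right h (by positivity)
        _ = c := by field_simp
      set y : Fin n → ℝ := fun i => if i = l then x l + ε else if i = j then x j - ε else x i
        with hydef
      have hynn : ∀ i, 0 ≤ y i := by
        intro i
        simp only [hydef]
        by_cases hil : i = l
        · rw [if_pos hil]
          have := hnn l
          linarith
        · rw [if_neg hil]
          by_cases hij : i = j
          · rw [if_pos hij]
            linarith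
          · rw [if_neg hij]
            exact hnn i
      have hysum : ∑ i, y i = 1 := by
        have hptw : ∀ i, y i = x i + (if i = l then ε else 0) - (if i = j then ε else 0) := by
          intro i
          simp only [hydef]
          by_cases hil : i = l
          · subst hil
            rw [if_pos rfl, if_pos rfl, if_neg (fun hh => hjl hh.symm)]
            ring
          · rw [if_neg hil, if_neg hil]
            by_cases hij : i = j
            · subst hij
              rw [if_pos rfl, if_pos rfl]
              ring
            · rw [if_neg hij, if_neg hij]
              ring
        rw [Finset.sum_congr rfl fun i _ => hptw i, Finset.sum_sub_distrib,
          Finset.sum_add_distrib, hsum, Finset.sum_ite_eq' univ l fun _ => ε,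
          Finset.sum_ite_eq' univ j fun _ => ε, if_pos (Finset.mem_univ l),
          if_pos (Finset.mem_univ j)]
        ring
      have hid := perturb H x j l hjl ε y (fun i => rfl)
      have hle := hopt y hynn hysum
      rw [hid] at hle
      -- hle : Pa + ε * c - ε^2 * Ev ≤ Pa ; contradiction
      have hquad : 0 < ε * c - ε ^ 2 * Ev := by
        nlinarith [mul_le_mul_of_nonneg_left hεc hε0.le, mul_pos hε0 hε0]
      rw [← hcdef, ← hEvdef, ← hPadef] at hle
      linarith
  -- Step 3 : on the support the derivative equals r * Pa
  have hDr : ∀ j : Fin n, 0 < x j → Dl H x j = (r : ℝ) * Pa := by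
    intro j hj
    have hall : ∀ m : Fin n, x m * Dl H x m = x m * Dl H x j := by
      intro m
      rcases (hnn m).eq_or_lt with h0 | hm
      · rw [← h0]; ring
      · have h1 := hKKT j m hj
        have h2 := hKKT m j hm
        rw [le_antisymm h1 h2]
    have heul := euler H x r huniform
    rw [Finset.sum_congr rfl (fun m _ => hall m), ← Finset.sum_mul, hsum, one_mul] at heul
    exact heul
  -- Step 4 : main argument
  intro k
  rcases (hnn k).eq_or_lt with h0 | hk
  · rw [← h0]
    positivity
  · have hstep : ∀ j ∈ univ.erase k, x k * (x j * El H x j k) ≤ x j * ((r : ℝ) * Pa) := by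
      intro j hj
      have hjk : j ≠ k := (Finset.mem_erase.mp hj).1
      rcases (hnn j).eq_or_lt with h0j | hjpos
      · rw [← h0j]
        simp
      · have h4 := xk_El_le_Dl H x hnn j k hjk
        rw [hDr j hjpos] at h4
        calc x k * (x j * El H x j k) = x j * (x k * El H x j k) := by ring
        _ ≤ x j * ((r : ℝ) * Pa) := mul_le_mul_of_nonneg_left h4 (hnn j)
    have hsum' : ∑ j ∈ univ.erase k, x j = 1 - x k := by
      have h5 : ∑ j ∈ univ.erase k, x j + x k = 1 := by
        rw [Finset.sum_erase_add univ x (Finset.mem_univ k)]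
        exact hsum
      linarith
    have hA : x k * (((r : ℝ) - 1) * Dl H x k) ≤ (1 - x k) * ((r : ℝ) * Pa) := by
      rw [← link_euler H x r (by omega) huniform k, Finset.mul_sum]
      calc ∑ j ∈ univ.erase k, x k * (x j * El H x j k)
          ≤ ∑ j ∈ univ.erase k, x j * ((r : ℝ) * Pa) := Finset.sum_le_sum hstep
      _ = (1 - x k) * ((r : ℝ) * Pa) := by rw [← Finset.sum_mul, hsum']
    rw [hDr k hk] at hA
    have hrPa : 0 < (r : ℝ) * Pa := by positivity
    have h6 : x k * ((r : ℝ) - 1) ≤ 1 - x k := by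
      have h7 : (x k * ((r : ℝ) - 1)) * ((r : ℝ) * Pa) ≤ (1 - x k) * ((r : ℝ) * Pa) := by
        calc (x k * ((r : ℝ) - 1)) * ((r : ℝ) * Pa)
            = x k * (((r : ℝ) - 1) * ((r : ℝ) * Pa)) := by ring
        _ ≤ (1 - x k) * ((r : ℝ) * Pa) := hA
      exact le_of_mul_le_mul_right h7 hrPa
    rw [le_div_iff₀ hr0]
    have : x k * (r : ℝ) = x k * ((r : ℝ) - 1) + x k := by ring
    linarith
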